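/- Let (E,d) be a metric space, A a random compact set and z ∈ E a point such that for every R > 0 there is t₀ > 0 with P(φ_{t₀}(·, B(z,R)) ⊆ B(z, R/2)) > 0 (strong recurrence at z), where φ is a white-noise RDS so that the events {A ⊆ B(z,R)} ∈ F₀ and {φ_{t₀}(·,B(z,R)) ⊆ B(z,R/2)} ∈ F_{0,t₀} are independent, and A is φ-invariant: A(θ_{t}ω) = φ_t(ω, A(ω)). Then for every ε > 0, P(A ⊆ B(z, ε)) > 0. -/

import Mathlib

open MeasureTheory Metric

/-- if a `φ`-invariant random compact set `A` is inside some ball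
around `z` with positive probability, `φ` is strongly recurrent at `z`, and the
relevant events are independent (white noise structure), then for every `ε > 0`
the attractor is inside `B(z, ε)` with positive probability. -/
theorem strong_recurrence_attractor_small
    (Ω : Type*) [MeasurableSpace Ω] (P : Measure Ω) [IsProbabilityMeasure P]
    (E : Type*) [MetricSpace E] (z : E)
    (θ : ℝ → Ω → Ω) (hθ : ∀ t, MeasurePreserving (θ t) P P)
    (φ : ℝ → Ω → E → E) (A : Ω → Set E)
    -- `A` is a random compact set starting inside some ball with positive probability
    (hAcpt : ∀ ω, IsCompact (A ω))
    (hA0 : ∃ r₀ > (0:ℝ), 0 < P {ω | A ω ⊆ ball z r₀})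
    -- invariance of `A` under the cocycle
    (hinv : ∀ t ≥ (0:ℝ), ∀ ω, A (θ t ω) = φ t ω '' A ω)
    -- strong recurrence at `z`
    (hrec : ∀ R > (0:ℝ), ∃ t₀ > (0:ℝ),
      0 < P {ω | ∀ x ∈ ball z R, φ t₀ ω x ∈ ball z (R/2)})
    -- independence of the past event `{A ⊆ B(z,r)}` and the future event
    -- `{φ_t(·, B(z,r)) ⊆ B(z, r/2)}`
    (hindep : ∀ r > (0:ℝ), ∀ t > (0:ℝ),
      P ({ω | A ω ⊆ ball z r} ∩ {ω | ∀ x ∈ ball z r, φ t ω x ∈ ball z (r/2)})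
        = P {ω | A ω ⊆ ball z r} * P {ω | ∀ x ∈ ball z r, φ t ω x ∈ ball z (r/2)}) :
    ∀ ε > (0:ℝ), 0 < P {ω | A ω ⊆ ball z ε} := by

  obtain ⟨r₀, hr₀, hP0⟩ := hA0
  have key : ∀ r > (0:ℝ), 0 < P {ω | A ω ⊆ ball z r} →
      0 < P {ω | A ω ⊆ ball z (r/2)} := by
    intro r hr hP
    obtain ⟨t₀, ht₀, hrecP⟩ := hrec r hr
    have hpos : 0 < P ({ω | A ω ⊆ ball z r} ∩
        {ω | ∀ x ∈ ball z r, φ t₀ ω x ∈ ball z (r/2)}) := by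
      rw [hindep r hr t₀ ht₀]
      exact ENNReal.mul_pos hP.ne' hrecP.ne'
    have hsub : ({ω | A ω ⊆ ball z r} ∩
        {ω | ∀ x ∈ ball z r, φ t₀ ω x ∈ ball z (r/2)}) ⊆
        θ t₀ ⁻¹' {ω | A ω ⊆ ball z (r/2)} := by
      rintro ω ⟨h1, h2⟩
      simp only [Set.mem_preimage, Set.mem_setOf_eq, hinv t₀ ht₀.le ω]
      rintro _ ⟨x, hx, rfl⟩
      exact h2 x (h1 hx)
    calc (0:ENNReal) < P ({ω | A ω ⊆ ball z r} ∩
          {ω | ∀ x ∈ ball z r, φ t₀ ω x ∈ ball z (r/2)}) := hpos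
      _ ≤ P (θ t₀ ⁻¹' {ω | A ω ⊆ ball z (r/2)}) := measure_mono hsub
      _ ≤ (Measure.map (θ t₀) P) {ω | A ω ⊆ ball z (r/2)} :=
          MeasureTheory.Measure.le_map_apply (hθ t₀).measurable.aemeasurable _
      _ = P {ω | A ω ⊆ ball z (r/2)} := by rw [(hθ t₀).map_eq]
  have hiter : ∀ n : ℕ, 0 < P {ω | A ω ⊆ ball z (r₀ / 2 ^ n)} := by
    intro n
    induction n with
    | zero => simpa using hP0
    | succ n ih =>
        have h2 : r₀ / 2 ^ n > 0 := by positivity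
        have := key _ h2 ih
        have heq : r₀ / 2 ^ n / 2 = r₀ / 2 ^ (n + 1) := by ring
        rwa [heq] at this
  intro ε hε
  obtain ⟨n, hn⟩ : ∃ n : ℕ, r₀ / 2 ^ n < ε := by
    obtain ⟨n, hn⟩ := exists_pow_lt_of_lt_one (div_pos hε hr₀) (by norm_num : (1:ℝ)/2 < 1)
    refine ⟨n, ?_⟩
    have : r₀ / 2 ^ n = r₀ * (1/2) ^ n := by
      field_simp
      rw [← mul_pow]; norm_num
    rw [this]
    calc r₀ * (1/2)^n < r₀ * (ε / r₀) := by
          exact (mul_lt_mul_iff_right₀ hr₀).mpr hn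
      _ = ε := by field_simp
  refine lt_of_lt_of_le (hiter n) (measure_mono ?_)
  intro ω hω
  exact hω.trans (ball_subset_ball hn.le)
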